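/- arXiv:quant-ph/0404046 — 2 statements merged into one kernel-verified Lean document; each statement's English description precedes it below -/
import Mathlib

section
/- Let x, y, x', y' be nonnegative vectors (x the same length as y, and x' the same length as y'). Then: (1) if x ◁^w y and x' ◁^w y', then x⊕x' ◁^w y⊕y'; (2) if x ◁^w y and x' ◁ y', then x⊕x' ◁^w y⊕y' if and only if max y' > min y; (3) if x ◁^w y, x' ≺^w y', and every component of x' is positive, then x⊗x' ◁^w y⊗y'. -/
noncomputable section

/-- `eSum x l` : the sum of the `l` largest components of `x`. -/
def eSum {n : ℕ} (x : Fin n → ℝ) (l : ℕ) : ℝ :=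
  sSup {r | ∃ s : Finset (Fin n), s.card = l ∧ r = ∑ i ∈ s, x i}

/-- `ESum x l` : the sum of the `l` smallest components of `x`. -/
def ESum {n : ℕ} (x : Fin n → ℝ) (l : ℕ) : ℝ :=
  sInf {r | ∃ s : Finset (Fin n), s.card = l ∧ r = ∑ i ∈ s, x i}

/-- Majorization `x ≺ y` (for vectors with equal total sum):
`e_l(x) ≤ e_l(y)` for all `1 ≤ l ≤ n`. -/
def Maj {n : ℕ} (x y : Fin n → ℝ) : Prop :=
  (∑ i, x i) = (∑ i, y i) ∧ ∀ l : ℕ, 1 ≤ l → l ≤ n → eSum x l ≤ eSum y l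

/-- Strict majorization `x ◁ y`: equal total sums and `e_l(x) < e_l(y)` for all
`1 ≤ l ≤ n - 1`. -/
def SMaj {n : ℕ} (x y : Fin n → ℝ) : Prop :=
  (∑ i, x i) = (∑ i, y i) ∧ ∀ l : ℕ, 1 ≤ l → l + 1 ≤ n → eSum x l < eSum y l

/-- Super-majorization `x ≺ʷ y` : `E_l(x) ≥ E_l(y)` for all `1 ≤ l ≤ n`. -/
def SupMaj {n : ℕ} (x y : Fin n → ℝ) : Prop :=
  ∀ l : ℕ, 1 ≤ l → l ≤ n → ESum y l ≤ ESum x l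

/-- Strict super-majorization `x ◁ʷ y` : `E_l(x) > E_l(y)` for all `1 ≤ l ≤ n`. -/
def SSupMaj {n : ℕ} (x y : Fin n → ℝ) : Prop :=
  ∀ l : ℕ, 1 ≤ l → l ≤ n → ESum y l < ESum x l

/-- Tensor product of two vectors: the vector of all pairwise products. -/
def tensor {m k : ℕ} (x : Fin m → ℝ) (c : Fin k → ℝ) : Fin (m * k) → ℝ :=
  fun i => x (finProdFinEquiv.symm i).1 * c (finProdFinEquiv.symm i).2

/-- `k`-fold tensor power of a vector. -/
def tpow {n : ℕ} (x : Fin n → ℝ) (k : ℕ) : Fin (n ^ k) → ℝ :=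
  fun i => ∏ j : Fin k, x (finFunctionFinEquiv.symm i j)

/-- `V^n` : probability vectors with components in non-increasing order. -/
def Vn (n : ℕ) : Set (Fin n → ℝ) :=
  {x | (∀ i, 0 ≤ x i) ∧ (∑ i, x i) = 1 ∧ Antitone x}

/-- `S(y)` : members of `V^n` majorized by `y`. -/
def Sset {n : ℕ} (y : Fin n → ℝ) : Set (Fin n → ℝ) :=
  {x ∈ Vn n | Maj x y}

/-- `T(y,c)` : members of `V^n` with `x ⊗ c ≺ y ⊗ c`. -/
def Tcat {n k : ℕ} (y : Fin n → ℝ) (c : Fin k → ℝ) : Set (Fin n → ℝ) :=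
  {x ∈ Vn n | Maj (tensor x c) (tensor y c)}

/-- Local uniformity `l_u(c)` : the minimum of the consecutive ratios `c_{i+1}/c_i`. -/
def lu {k : ℕ} (c : Fin k → ℝ) : ℝ :=
  sInf {r | ∃ i : ℕ, ∃ h : i + 1 < k, r = c ⟨i + 1, h⟩ / c ⟨i, Nat.lt_of_succ_lt h⟩}

/-- Global uniformity `g_u(c) = c_k / c_1` (smallest over largest component of a
non-increasingly ordered vector). -/
def gu {k : ℕ} (c : Fin k → ℝ) : ℝ :=
  if h : 0 < k then c ⟨k - 1, Nat.sub_lt h Nat.one_pos⟩ / c ⟨0, h⟩ else 1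

/-- Largest component. -/
def maxc {n : ℕ} (x : Fin n → ℝ) : ℝ := sSup (Set.range x)

/-- Smallest component. -/
def minc {n : ℕ} (x : Fin n → ℝ) : ℝ := sInf (Set.range x)

/-- `c'` is a (contiguous) segment of `c`. -/
def IsSegment {j k : ℕ} (c' : Fin j → ℝ) (c : Fin k → ℝ) : Prop :=
  ∃ (i : ℕ) (_h : i + j ≤ k), ∀ t : Fin j, c' t = c ⟨i + t, by have := t.isLt; omega⟩

/-- The first `d` components of a vector. -/
def take {n : ℕ} (x : Fin n → ℝ) (d : ℕ) (h : d ≤ n) : Fin d → ℝ :=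
  fun i => x ⟨i, Nat.lt_of_lt_of_le i.isLt h⟩

/-- The components of a vector after the first `d` ones. -/
def drop {n : ℕ} (x : Fin n → ℝ) (d : ℕ) : Fin (n - d) → ℝ :=
  fun i => x ⟨d + i, by have := i.isLt; omega⟩

/-- The segment `(c_i, …, c_j)` of `c` (`0`-based indices). -/
def seg {k : ℕ} (c : Fin k → ℝ) (i j : ℕ) (hij : i ≤ j) (hj : j < k) :
    Fin (j - i + 1) → ℝ :=
  fun t => c ⟨i + t, by have := t.isLt; omega⟩

/-- `(c_i, …, c_j)` is a block of the decomposition `[c]_α` of the (positive,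
non-increasingly ordered) vector `c` according to `α`: ratios within the block
exceed `α`, and the ratios at the two boundaries of the block are `≤ α`
(or the block touches an end of `c`). -/
def IsBlock {k : ℕ} (α : ℝ) (c : Fin k → ℝ) (i j : ℕ) : Prop :=
  ∃ (hij : i ≤ j) (hj : j < k),
    (i = 0 ∨ c ⟨i, by omega⟩ / c ⟨i - 1, by omega⟩ ≤ α) ∧
    (j = k - 1 ∨ ∃ hj1 : j + 1 < k, c ⟨j + 1, hj1⟩ / c ⟨j, hj⟩ ≤ α) ∧
    (∀ (t : ℕ) (ht1 : i ≤ t) (ht2 : t < j), α < c ⟨t + 1, by omega⟩ / c ⟨t, by omega⟩)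

/-- `T_k(y)` : states transformable to `y` with a `k`-dimensional catalyst. -/
def Tk {n : ℕ} (k : ℕ) (y : Fin n → ℝ) : Set (Fin n → ℝ) :=
  {x ∈ Vn n | ∃ c : Fin k → ℝ, (∀ i, 0 < c i) ∧ (∑ i, c i) = 1 ∧ Antitone c ∧
    Maj (tensor x c) (tensor y c)}

/-- `M_k(y)` : states `x` with `x^{⊗k} ≺ y^{⊗k}`. -/
def Mk {n : ℕ} (k : ℕ) (y : Fin n → ℝ) : Set (Fin n → ℝ) :=
  {x ∈ Vn n | Maj (tpow x k) (tpow y k)}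

/-- `T(y)` : states transformable to `y` with some catalyst. -/
def Tinf {n : ℕ} (y : Fin n → ℝ) : Set (Fin n → ℝ) :=
  {x ∈ Vn n | ∃ (k : ℕ) (c : Fin k → ℝ), 0 < k ∧ (∀ i, 0 < c i) ∧ (∑ i, c i) = 1 ∧
    Antitone c ∧ Maj (tensor x c) (tensor y c)}

/-- `M(y)` : states `x` with `x^{⊗k} ≺ y^{⊗k}` for some `k ≥ 1`. -/
def Minf {n : ℕ} (y : Fin n → ℝ) : Set (Fin n → ℝ) :=
  {x ∈ Vn n | ∃ k : ℕ, 1 ≤ k ∧ Maj (tpow x k) (tpow y k)}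

/-- `S^λ(y)` : states `x` with `x ≺ʷ λ y`. -/
def Slam {n : ℕ} (lam : ℝ) (y : Fin n → ℝ) : Set (Fin n → ℝ) :=
  {x ∈ Vn n | SupMaj x (fun i => lam * y i)}

/-- `T^λ(y,c)` : states `x` with `x ⊗ c ≺ʷ λ (y ⊗ c)`. -/
def Tlamc {n k : ℕ} (lam : ℝ) (y : Fin n → ℝ) (c : Fin k → ℝ) : Set (Fin n → ℝ) :=
  {x ∈ Vn n | SupMaj (tensor x c) (fun i => lam * tensor y c i)}

/-- `T_k^λ(y)`. -/
def Tklam {n : ℕ} (k : ℕ) (lam : ℝ) (y : Fin n → ℝ) : Set (Fin n → ℝ) :=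
  {x ∈ Vn n | ∃ c : Fin k → ℝ, (∀ i, 0 < c i) ∧ (∑ i, c i) = 1 ∧ Antitone c ∧
    SupMaj (tensor x c) (fun i => lam * tensor y c i)}

/-- `M_k^λ(y)`. -/
def Mklam {n : ℕ} (k : ℕ) (lam : ℝ) (y : Fin n → ℝ) : Set (Fin n → ℝ) :=
  {x ∈ Vn n | SupMaj (tpow x k) (fun i => lam ^ k * tpow y k i)}

/-- `T^λ(y)`. -/
def Tlaminf {n : ℕ} (lam : ℝ) (y : Fin n → ℝ) : Set (Fin n → ℝ) :=
  {x ∈ Vn n | ∃ (k : ℕ) (c : Fin k → ℝ), 0 < k ∧ (∀ i, 0 < c i) ∧ (∑ i, c i) = 1 ∧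
    Antitone c ∧ SupMaj (tensor x c) (fun i => lam * tensor y c i)}

/-- `M^λ(y)`. -/
def Mlaminf {n : ℕ} (lam : ℝ) (y : Fin n → ℝ) : Set (Fin n → ℝ) :=
  {x ∈ Vn n | ∃ k : ℕ, 1 ≤ k ∧ SupMaj (tpow x k) (fun i => lam ^ k * tpow y k i)}

/-- `K_d(y)` : concatenations `x = x' ⊕ x''` with `x' ◁ y'` and `x'' ◁ y''`,
where `y'` is the first-`d` part of `y` and `y''` the rest. -/
def Kd {n : ℕ} (y : Fin n → ℝ) (d : ℕ) (h : d ≤ n) : Set (Fin n → ℝ) :=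
  {x ∈ Vn n | SMaj (take x d h) (take y d h) ∧ SMaj (drop x d) (drop y d)}

/-- `y(d)` : first `d` components equal to `e_d(y)/d`, the last `n-d` equal to
`(1 - e_d(y))/(n-d)`. -/
def yvec {n : ℕ} (y : Fin n → ℝ) (d : ℕ) : Fin n → ℝ :=
  fun i => if (i : ℕ) < d then eSum y d / d else (1 - eSum y d) / (n - d)

/-- `K_d^λ(y)` : states `x ∈ S^λ(y)` with `E_l(x) = λ E_l(y)` iff `l = n - d`. -/
def Kdlam {n : ℕ} (lam : ℝ) (y : Fin n → ℝ) (d : ℕ) : Set (Fin n → ℝ) :=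
  {x ∈ Vn n | SupMaj x (fun i => lam * y i) ∧
    ∀ l : ℕ, 1 ≤ l → l ≤ n → (ESum x l = lam * ESum y l ↔ l = n - d)}

namespace Aux


variable {n : ℕ}

def sumSet (x : Fin n → ℝ) (l : ℕ) : Set ℝ :=
  {r | ∃ s : Finset (Fin n), s.card = l ∧ r = ∑ i ∈ s, x i}

lemma sumSet_finite (x : Fin n → ℝ) (l : ℕ) : (sumSet x l).Finite := by
  have : sumSet x l ⊆ (fun s : Finset (Fin n) => ∑ i ∈ s, x i) '' Set.univ := by
    rintro r ⟨s, _, rfl⟩; exact ⟨s, trivial, rfl⟩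
  exact Set.Finite.subset (Set.Finite.image _ (Set.finite_univ)) this

lemma sumSet_nonempty (x : Fin n → ℝ) {l : ℕ} (hl : l ≤ n) : (sumSet x l).Nonempty := by
  obtain ⟨t, _, ht⟩ := Finset.exists_subset_card_eq (s := (Finset.univ : Finset (Fin n)))
    (by simpa using hl)
  exact ⟨∑ i ∈ t, x i, t, ht, rfl⟩

lemma ESum_le_sum (x : Fin n → ℝ) {l : ℕ} {s : Finset (Fin n)} (hs : s.card = l) :
    ESum x l ≤ ∑ i ∈ s, x i :=
  csInf_le (sumSet_finite x l).bddBelow ⟨s, hs, rfl⟩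

lemma exists_ESum (x : Fin n → ℝ) {l : ℕ} (hl : l ≤ n) :
    ∃ s : Finset (Fin n), s.card = l ∧ ESum x l = ∑ i ∈ s, x i :=
  (sumSet_nonempty x hl).csInf_mem (sumSet_finite x l)

lemma sum_le_eSum (x : Fin n → ℝ) {l : ℕ} {s : Finset (Fin n)} (hs : s.card = l) :
    ∑ i ∈ s, x i ≤ eSum x l :=
  le_csSup (sumSet_finite x l).bddAbove ⟨s, hs, rfl⟩

lemma exists_eSum (x : Fin n → ℝ) {l : ℕ} (hl : l ≤ n) :
    ∃ s : Finset (Fin n), s.card = l ∧ eSum x l = ∑ i ∈ s, x i :=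
  (sumSet_nonempty x hl).csSup_mem (sumSet_finite x l)

lemma ESum_zero (x : Fin n → ℝ) : ESum x 0 = 0 := by
  obtain ⟨s, hs, h⟩ := exists_ESum x (Nat.zero_le n)
  rw [h, Finset.card_eq_zero.mp hs, Finset.sum_empty]

lemma ESum_nonneg {x : Fin n → ℝ} (hx : ∀ i, 0 ≤ x i) {l : ℕ} (hl : l ≤ n) :
    0 ≤ ESum x l := by
  obtain ⟨s, _, h⟩ := exists_ESum x hl
  rw [h]; exact Finset.sum_nonneg fun i _ => hx i

lemma ESum_eq_sub (x : Fin n → ℝ) {l : ℕ} (hl : l ≤ n) :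
    ESum x l = (∑ i, x i) - eSum x (n - l) := by
  apply le_antisymm
  · obtain ⟨t, ht, h⟩ := exists_eSum x (Nat.sub_le n l)
    have hc : tᶜ.card = l := by
      rw [Finset.card_compl, ht]; simp; omega
    calc ESum x l ≤ ∑ i ∈ tᶜ, x i := ESum_le_sum x hc
    _ = (∑ i, x i) - eSum x (n - l) := by
        rw [h, eq_sub_iff_add_eq, Finset.sum_compl_add_sum]
  · obtain ⟨s, hs, h⟩ := exists_ESum x hl
    have hc : sᶜ.card = n - l := by rw [Finset.card_compl, hs]; simp
    have := sum_le_eSum x hc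
    rw [h]
    have : (∑ i, x i) = ∑ i ∈ sᶜ, x i + ∑ i ∈ s, x i := (Finset.sum_compl_add_sum s x).symm
    rw [this]
    have := sum_le_eSum x hc
    linarith

lemma ESum_univ (x : Fin n → ℝ) : ESum x n = ∑ i, x i := by
  rw [ESum_eq_sub x (le_refl n)]
  simp only [Nat.sub_self]
  obtain ⟨s, hs, h⟩ := exists_eSum x (Nat.zero_le n)
  rw [h, Finset.card_eq_zero.mp hs, Finset.sum_empty, sub_zero]


variable {m p : ℕ}

lemma append_le (x : Fin m → ℝ) (x' : Fin p → ℝ) {a b : ℕ} (ha : a ≤ m) (hb : b ≤ p) :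
    ESum (Fin.append x x') (a + b) ≤ ESum x a + ESum x' b := by
  obtain ⟨s1, hs1, h1⟩ := exists_ESum x ha
  obtain ⟨s2, hs2, h2⟩ := exists_ESum x' hb
  set t : Finset (Fin (m + p)) := s1.map (Fin.castAddEmb p) ∪ s2.map (Fin.natAddEmb m) with ht
  have hdisj : Disjoint (s1.map (Fin.castAddEmb p)) (s2.map (Fin.natAddEmb m)) := by
    rw [Finset.disjoint_left]
    rintro i hi hi'
    obtain ⟨j, _, rfl⟩ := Finset.mem_map.mp hi
    obtain ⟨k, _, hk⟩ := Finset.mem_map.mp hi'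
    have h1 : ((Fin.castAddEmb p j : Fin (m + p)) : ℕ) < m := by simp [Fin.castAddEmb]
    have h2 : (Fin.natAddEmb m k : Fin (m+p)) = Fin.castAddEmb p j := hk
    have := congrArg (fun z : Fin (m+p) => (z : ℕ)) h2
    simp [Fin.natAddEmb_apply, Fin.castAddEmb_apply] at this
    omega
  have hcard : t.card = a + b := by
    rw [ht, Finset.card_union_of_disjoint hdisj, Finset.card_map, Finset.card_map, hs1, hs2]
  have hsum : ∑ i ∈ t, Fin.append x x' i = ∑ i ∈ s1, x i + ∑ i ∈ s2, x' i := by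
    rw [ht, Finset.sum_union hdisj, Finset.sum_map, Finset.sum_map]
    congr 1
    · exact Finset.sum_congr rfl fun i _ => Fin.append_left x x' i
    · exact Finset.sum_congr rfl fun i _ => Fin.append_right x x' i
  calc ESum (Fin.append x x') (a + b) ≤ ∑ i ∈ t, Fin.append x x' i := ESum_le_sum _ hcard
    _ = ESum x a + ESum x' b := by rw [hsum, h1, h2]

lemma append_ge (x : Fin m → ℝ) (x' : Fin p → ℝ) {l : ℕ} (hl : l ≤ m + p) :
    ∃ a b : ℕ, a + b = l ∧ a ≤ m ∧ b ≤ p ∧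
      ESum x a + ESum x' b ≤ ESum (Fin.append x x') l := by
  obtain ⟨s, hs, h⟩ := exists_ESum (Fin.append x x') hl
  set s1 : Finset (Fin m) := Finset.univ.filter (fun i => Fin.castAdd p i ∈ s) with hs1d
  set s2 : Finset (Fin p) := Finset.univ.filter (fun j => Fin.natAdd m j ∈ s) with hs2d
  have hsplit : s = s1.map (Fin.castAddEmb p) ∪ s2.map (Fin.natAddEmb m) := by
    ext i
    simp only [Finset.mem_union, Finset.mem_map, hs1d, hs2d, Finset.mem_filter,
      Finset.mem_univ, true_and]
    constructor
    · intro hi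
      rcases Nat.lt_or_ge (i : ℕ) m with hc | hc
      · refine Or.inl ⟨⟨i, hc⟩, ?_, ?_⟩
        · have : Fin.castAdd p ⟨(i : ℕ), hc⟩ = i := by
            simp [Fin.castAdd, Fin.ext_iff]
          rwa [this]
        · simp [Fin.castAddEmb, Fin.castLEEmb, Fin.castLE, Fin.ext_iff]
      · refine Or.inr ⟨⟨(i : ℕ) - m, by omega⟩, ?_, ?_⟩
        · have : Fin.natAdd m ⟨(i : ℕ) - m, by omega⟩ = i := by
            simp [Fin.natAdd, Fin.ext_iff]; omega
          rwa [this]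
        · simp [Fin.natAddEmb_apply, Fin.natAdd, Fin.ext_iff]; omega
    · rintro (⟨j, hj, rfl⟩ | ⟨k, hk, rfl⟩)
      · simpa [Fin.castAddEmb_apply] using hj
      · simpa [Fin.natAddEmb_apply] using hk
  have hdisj : Disjoint (s1.map (Fin.castAddEmb p)) (s2.map (Fin.natAddEmb m)) := by
    rw [Finset.disjoint_left]
    rintro i hi hi'
    obtain ⟨j, _, rfl⟩ := Finset.mem_map.mp hi
    obtain ⟨k, _, hk⟩ := Finset.mem_map.mp hi'
    have := congrArg (fun z : Fin (m+p) => (z : ℕ)) hk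
    simp [Fin.natAddEmb_apply, Fin.castAddEmb_apply, Fin.castLE, Fin.natAdd] at this
    have hj := j.isLt
    omega
  refine ⟨s1.card, s2.card, ?_, by simpa using Finset.card_le_univ s1,
    by simpa using Finset.card_le_univ s2, ?_⟩
  · rw [← hs, hsplit, Finset.card_union_of_disjoint hdisj, Finset.card_map, Finset.card_map]
  · rw [h, hsplit, Finset.sum_union hdisj, Finset.sum_map, Finset.sum_map]
    gcongr
    · calc ESum x s1.card ≤ ∑ i ∈ s1, x i := ESum_le_sum _ rfl
        _ = ∑ i ∈ s1, Fin.append x x' (Fin.castAddEmb p i) := by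
            exact Finset.sum_congr rfl fun i _ => (Fin.append_left x x' i).symm
    · calc ESum x' s2.card ≤ ∑ i ∈ s2, x' i := ESum_le_sum _ rfl
        _ = ∑ i ∈ s2, Fin.append x x' (Fin.natAddEmb m i) := by
            exact Finset.sum_congr rfl fun i _ => (Fin.append_right x x' i).symm

lemma sum_tensor_map (x : Fin m → ℝ) (x' : Fin p → ℝ) (t : Finset (Fin m × Fin p)) :
    ∑ k ∈ t.map finProdFinEquiv.toEmbedding, tensor x x' k = ∑ q ∈ t, x q.1 * x' q.2 := by
  rw [Finset.sum_map]
  exact Finset.sum_congr rfl fun q _ => by simp [tensor]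

lemma tensor_le (x : Fin m → ℝ) (x' : Fin p → ℝ) (b : Fin p → ℕ) (hb : ∀ j, b j ≤ m) :
    ESum (tensor x x') (∑ j, b j) ≤ ∑ j, x' j * ESum x (b j) := by
  choose s hcard hsum using fun j => exists_ESum x (hb j)
  set t : Finset (Fin m × Fin p) :=
    Finset.univ.biUnion (fun j => (s j).map ⟨fun i => (i, j), fun a b h => (Prod.mk.injEq ..).mp h |>.1⟩) with htd
  have hpd : ∀ j1 ∈ (Finset.univ : Finset (Fin p)), ∀ j2 ∈ Finset.univ, j1 ≠ j2 →
      Disjoint ((s j1).map ⟨fun i => (i, j1), fun a b h => (Prod.mk.injEq ..).mp h |>.1⟩)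
        ((s j2).map ⟨fun i => (i, j2), fun a b h => (Prod.mk.injEq ..).mp h |>.1⟩) := by
    intro j1 _ j2 _ hne
    rw [Finset.disjoint_left]
    rintro q hq hq'
    obtain ⟨i1, _, rfl⟩ := Finset.mem_map.mp hq
    obtain ⟨i2, _, hk⟩ := Finset.mem_map.mp hq'
    exact hne ((Prod.mk.injEq ..).mp hk).2.symm
  have htc : t.card = ∑ j, b j := by
    rw [htd, Finset.card_biUnion hpd]
    exact Finset.sum_congr rfl fun j _ => by rw [Finset.card_map, hcard]
  have hts : ∑ q ∈ t, x q.1 * x' q.2 = ∑ j, x' j * ESum x (b j) := by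
    rw [htd, Finset.sum_biUnion]
    · refine Finset.sum_congr rfl fun j _ => ?_
      rw [Finset.sum_map, hsum j, Finset.mul_sum]
      exact Finset.sum_congr rfl fun i _ => by rw [mul_comm]; rfl
    · exact fun j1 h1 j2 h2 hne => hpd j1 h1 j2 h2 hne
  calc ESum (tensor x x') (∑ j, b j)
      ≤ ∑ k ∈ t.map finProdFinEquiv.toEmbedding, tensor x x' k :=
        ESum_le_sum _ (by rw [Finset.card_map, htc])
    _ = ∑ j, x' j * ESum x (b j) := by rw [sum_tensor_map, hts]

lemma tensor_ge (x : Fin m → ℝ) (x' : Fin p → ℝ) (hx' : ∀ j, 0 ≤ x' j) {l : ℕ}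
    (hl : l ≤ m * p) :
    ∃ b : Fin p → ℕ, (∀ j, b j ≤ m) ∧ (∑ j, b j) = l ∧
      ∑ j, x' j * ESum x (b j) ≤ ESum (tensor x x') l := by
  obtain ⟨s, hs, h⟩ := exists_ESum (tensor x x') hl
  set t : Finset (Fin m × Fin p) := s.image finProdFinEquiv.symm with htd
  have htc : t.card = l := by
    rw [htd, Finset.card_image_of_injective _ finProdFinEquiv.symm.injective, hs]
  set b : Fin p → ℕ := fun j => (t.filter (fun q => q.2 = j)).card with hbd
  have hfib : ∀ j, ((t.filter (fun q => q.2 = j)).image Prod.fst).card = b j := by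
    intro j
    rw [Finset.card_image_of_injOn]
    rintro q1 hq1 q2 hq2 hf
    have e1 := (Finset.mem_filter.mp hq1).2
    have e2 := (Finset.mem_filter.mp hq2).2
    exact Prod.ext hf (e1.trans e2.symm)
  refine ⟨b, ?_, ?_, ?_⟩
  · intro j
    calc b j = _ := (hfib j).symm
      _ ≤ (Finset.univ : Finset (Fin m)).card := Finset.card_le_univ _
      _ = m := by simp
  · rw [← htc]
    exact (Finset.card_eq_sum_card_fiberwise (fun q _ => Finset.mem_univ q.2)).symm
  · have hsplit : ∑ q ∈ t, x q.1 * x' q.2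
        = ∑ j, ∑ q ∈ t.filter (fun q => q.2 = j), x q.1 * x' q.2 :=
      (Finset.sum_fiberwise_of_maps_to (fun q _ => Finset.mem_univ q.2) _).symm
    have hterm : ∀ j : Fin p, x' j * ESum x (b j) ≤ ∑ q ∈ t.filter (fun q => q.2 = j), x q.1 * x' q.2 := by
      intro j
      have hsum : ∑ q ∈ t.filter (fun q => q.2 = j), x q.1 * x' q.2
          = x' j * ∑ i ∈ (t.filter (fun q => q.2 = j)).image Prod.fst, x i := by
        rw [Finset.mul_sum, Finset.sum_image]
        · refine Finset.sum_congr rfl fun q hq => ?_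
          rw [(Finset.mem_filter.mp hq).2, mul_comm]
        · rintro q1 hq1 q2 hq2 hf
          exact Prod.ext hf (((Finset.mem_filter.mp hq1).2).trans ((Finset.mem_filter.mp hq2).2).symm)
      rw [hsum]
      exact mul_le_mul_of_nonneg_left (ESum_le_sum x (hfib j)) (hx' j)
    have : ∑ q ∈ t, x q.1 * x' q.2 = ∑ i ∈ s, tensor x x' i := by
      rw [htd, Finset.sum_image (fun q1 _ q2 _ hf => finProdFinEquiv.symm.injective hf)]
      exact Finset.sum_congr rfl fun i _ => by simp [tensor]
    rw [h, ← this, hsplit]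
    exact Finset.sum_le_sum fun j _ => hterm j

lemma ESum_perm (x : Fin n → ℝ) (σ : Equiv.Perm (Fin n)) (l : ℕ) :
    ESum (x ∘ σ) l = ESum x l := by
  unfold ESum
  congr 1
  ext r
  constructor
  · rintro ⟨s, hs, rfl⟩
    refine ⟨s.image σ, by rw [Finset.card_image_of_injective _ σ.injective, hs], ?_⟩
    rw [Finset.sum_image (fun a _ b _ h => σ.injective h)]
    rfl
  · rintro ⟨s, hs, rfl⟩
    refine ⟨s.image σ.symm, by rw [Finset.card_image_of_injective _ σ.symm.injective, hs], ?_⟩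
    rw [Finset.sum_image (fun a _ b _ h => σ.symm.injective h)]
    exact Finset.sum_congr rfl fun i _ => by simp

lemma le_of_strictMono {l : ℕ} (e : Fin l → Fin n) (he : StrictMono e) (k : Fin l) :
    (k : ℕ) ≤ (e k : ℕ) := by
  induction' hk : (k : ℕ) with v ih generalizing k
  · exact Nat.zero_le _
  · have hv : v < l := by omega
    have h1 := ih ⟨v, hv⟩ rfl
    have h2 : e ⟨v, hv⟩ < e k := he (by rw [Fin.lt_def]; simp [hk])
    rw [Fin.lt_def] at h2
    omega

lemma ESum_sorted {z : Fin n → ℝ} (hz : Monotone z) {l : ℕ} (hl : l ≤ n) :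
    ESum z l = ∑ k : Fin l, z (Fin.castLE hl k) := by
  apply le_antisymm
  · have hc : ((Finset.univ : Finset (Fin l)).map (Fin.castLEEmb hl)).card = l := by simp
    calc ESum z l ≤ ∑ i ∈ (Finset.univ : Finset (Fin l)).map (Fin.castLEEmb hl), z i :=
          ESum_le_sum z hc
      _ = ∑ k : Fin l, z (Fin.castLE hl k) := by rw [Finset.sum_map]; rfl
  · obtain ⟨s, hs, h⟩ := exists_ESum z hl
    rw [h]
    set e := s.orderEmbOfFin hs with hed
    have hse : s = Finset.univ.image ⇑e := by
      apply Finset.coe_injective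
      rw [Finset.coe_image, Finset.coe_univ, Set.image_univ, hed, Finset.range_orderEmbOfFin]
    rw [hse, Finset.sum_image (fun a _ b _ hab => e.injective hab)]
    refine Finset.sum_le_sum fun k _ => hz ?_
    rw [Fin.le_def]
    exact le_of_strictMono e e.strictMono k

lemma abelSum : ∀ (q : ℕ) (u v a : ℕ → ℝ),
    (∀ l, l ≤ q → ∑ k ∈ Finset.range l, v k ≤ ∑ k ∈ Finset.range l, u k) →
    (∀ k l, k ≤ l → l < q → a l ≤ a k) →
    (∀ k, k < q → 0 ≤ a k) →
    ∑ k ∈ Finset.range q, v k * a k ≤ ∑ k ∈ Finset.range q, u k * a k := by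
  intro q
  induction q with
  | zero => intro u v a _ _ _; simp
  | succ q ih =>
    intro u v a hpart ha ha0
    have key : ∀ w : ℕ → ℝ, ∑ k ∈ Finset.range (q+1), w k * a k
        = ∑ k ∈ Finset.range q, w k * (a k - a q) + a q * ∑ k ∈ Finset.range (q+1), w k := by
      intro w
      rw [Finset.sum_range_succ, Finset.sum_range_succ w, mul_add, Finset.mul_sum]
      have h1 : ∑ k ∈ Finset.range q, w k * (a k - a q)
          = ∑ k ∈ Finset.range q, w k * a k - ∑ k ∈ Finset.range q, a q * w k := by
        rw [← Finset.sum_sub_distrib]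
        exact Finset.sum_congr rfl fun k _ => by ring
      rw [h1]
      ring
    rw [key u, key v]
    have h1 : ∑ k ∈ Finset.range q, v k * (a k - a q) ≤ ∑ k ∈ Finset.range q, u k * (a k - a q) := by
      apply ih
      · exact fun l hle => hpart l (by omega)
      · intro k l hkl hlq
        have := ha k l hkl (by omega)
        linarith
      · intro k hk
        have := ha k q (by omega) (by omega)
        linarith [ha0 q (by omega), ha0 k (by omega)]
    have h2 : a q * ∑ k ∈ Finset.range (q+1), v k ≤ a q * ∑ k ∈ Finset.range (q+1), u k :=
      mul_le_mul_of_nonneg_left (hpart (q+1) le_rfl) (ha0 q (by omega))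
    linarith

lemma range_sum_sorted (w : Fin p → ℝ) (σ : Equiv.Perm (Fin p)) (hm : Monotone (w ∘ σ))
    {l : ℕ} (hl : l ≤ p) :
    ∑ k ∈ Finset.range l, (if h : k < p then w (σ ⟨k, h⟩) else 0) = ESum w l := by
  rw [← Fin.sum_univ_eq_sum_range (fun k => if h : k < p then w (σ ⟨k, h⟩) else 0) l]
  have h1 : ESum w l = ∑ k : Fin l, (w ∘ σ) (Fin.castLE hl k) := by
    rw [← ESum_perm w σ l, ESum_sorted hm hl]
  rw [h1]
  refine Finset.sum_congr rfl fun k _ => ?_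
  have hk : (k : ℕ) < p := lt_of_lt_of_le k.isLt hl
  rw [dif_pos hk]
  rfl

lemma rearr (x' y' a : Fin p → ℝ) (ha : ∀ j, 0 ≤ a j)
    (hsup : ∀ l : ℕ, 1 ≤ l → l ≤ p → ESum y' l ≤ ESum x' l) :
    ∃ σ : Equiv.Perm (Fin p), ∑ j, y' j * a (σ j) ≤ ∑ j, x' j * a j := by
  set σx := Tuple.sort x' with hσx
  set σy := Tuple.sort y' with hσy
  set σa := Tuple.sort (fun j => -a j) with hσa
  have hmx : Monotone (x' ∘ σx) := Tuple.monotone_sort x'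
  have hmy : Monotone (y' ∘ σy) := Tuple.monotone_sort y'
  have hanti : Antitone (a ∘ σa) := by
    intro i j hij
    have := Tuple.monotone_sort (fun j => -a j) hij
    simpa using this
  -- Step B : Abel summation
  have stepB : ∑ k : Fin p, y' (σy k) * a (σa k) ≤ ∑ k : Fin p, x' (σx k) * a (σa k) := by
    have habel := abelSum p
      (fun k => if h : k < p then x' (σx ⟨k, h⟩) else 0)
      (fun k => if h : k < p then y' (σy ⟨k, h⟩) else 0)
      (fun k => if h : k < p then a (σa ⟨k, h⟩) else 0)
      (fun l hl => by
        rw [range_sum_sorted x' σx hmx hl, range_sum_sorted y' σy hmy hl]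
        rcases Nat.eq_zero_or_pos l with h0 | h1
        · subst h0
          obtain ⟨s, hs, h⟩ := exists_ESum x' (Nat.zero_le p)
          obtain ⟨t, ht, h'⟩ := exists_ESum y' (Nat.zero_le p)
          rw [h, h', Finset.card_eq_zero.mp hs, Finset.card_eq_zero.mp ht]
          simp
        · exact hsup l h1 hl)
      (fun k l hkl hlp => by
        simp only [dif_pos hlp, dif_pos (lt_of_le_of_lt hkl hlp)]
        exact hanti (by simpa [Fin.le_def] using hkl))
      (fun k hk => by simp only [dif_pos hk]; exact ha _)
    have cv : ∀ (w : Fin p → ℝ) (σ : Equiv.Perm (Fin p)),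
        ∑ k ∈ Finset.range p, (if h : k < p then w (σ ⟨k, h⟩) else 0) *
          (if h : k < p then a (σa ⟨k, h⟩) else 0) = ∑ k : Fin p, w (σ k) * a (σa k) := by
      intro w σ
      rw [← Fin.sum_univ_eq_sum_range (fun k =>
        (if h : k < p then w (σ ⟨k, h⟩) else 0) * (if h : k < p then a (σa ⟨k, h⟩) else 0)) p]
      exact Finset.sum_congr rfl fun k _ => by rw [dif_pos k.isLt, dif_pos k.isLt]
    rw [cv x' σx, cv y' σy] at habel
    exact habel
  -- Step A : rearrangement
  have hantiv : Antivary (x' ∘ σx) (a ∘ σa) := by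
    intro i j hij
    rcases le_or_gt j i with h | h
    · exact hmx h
    · exact absurd (hanti h.le) (not_le.mpr hij)
  have stepA : ∑ k : Fin p, x' (σx k) * a (σa k) ≤ ∑ j, x' j * a j := by
    have := hantiv.sum_mul_le_sum_mul_comp_perm (σ := σa⁻¹ * σx)
    calc ∑ k : Fin p, x' (σx k) * a (σa k) = ∑ i, (x' ∘ σx) i * (a ∘ σa) i := rfl
      _ ≤ ∑ i, (x' ∘ σx) i * (a ∘ σa) ((σa⁻¹ * σx) i) := this
      _ = ∑ i, x' (σx i) * a (σx i) := by
          refine Finset.sum_congr rfl fun i _ => ?_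
          simp [Function.comp, Equiv.Perm.mul_apply]
      _ = ∑ j, x' j * a j := Equiv.sum_comp σx (fun j => x' j * a j)
  refine ⟨σa * σy⁻¹, ?_⟩
  calc ∑ j, y' j * a ((σa * σy⁻¹) j) = ∑ k, y' (σy k) * a ((σa * σy⁻¹) (σy k)) :=
        (Equiv.sum_comp σy (fun j => y' j * a ((σa * σy⁻¹) j))).symm
    _ = ∑ k, y' (σy k) * a (σa k) := by
        refine Finset.sum_congr rfl fun k _ => ?_
        simp [Equiv.Perm.mul_apply]
    _ ≤ ∑ k : Fin p, x' (σx k) * a (σa k) := stepB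
    _ ≤ ∑ j, x' j * a j := stepA


lemma weak_le {n : ℕ} {x y : Fin n → ℝ}
    (h : ∀ l : ℕ, 1 ≤ l → l ≤ n → ESum y l < ESum x l)
    {a : ℕ} (ha : a ≤ n) : ESum y a ≤ ESum x a := by
  rcases Nat.eq_zero_or_pos a with h0 | h1
  · subst h0; rw [ESum_zero, ESum_zero]
  · exact (h a h1 ha).le

lemma minc_le {n : ℕ} (y : Fin n → ℝ) (i : Fin n) : minc y ≤ y i :=
  csInf_le (Set.finite_range y).bddBelow ⟨i, rfl⟩

lemma le_maxc {n : ℕ} (y : Fin n → ℝ) (i : Fin n) : y i ≤ maxc y :=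
  le_csSup (Set.finite_range y).bddAbove ⟨i, rfl⟩

lemma exists_minc {n : ℕ} (hn : 0 < n) (y : Fin n → ℝ) : ∃ i, y i = minc y := by
  have hne : (Set.range y).Nonempty := ⟨y ⟨0, hn⟩, ⟨0, hn⟩, rfl⟩
  exact (hne.csInf_mem (Set.finite_range y))

lemma exists_maxc {n : ℕ} (hn : 0 < n) (y : Fin n → ℝ) : ∃ i, y i = maxc y := by
  have hne : (Set.range y).Nonempty := ⟨y ⟨0, hn⟩, ⟨0, hn⟩, rfl⟩
  exact (hne.csSup_mem (Set.finite_range y))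

lemma mul_minc_le_ESum {n : ℕ} (y : Fin n → ℝ) {a : ℕ} (ha : a ≤ n) :
    (a : ℝ) * minc y ≤ ESum y a := by
  obtain ⟨s, hs, h⟩ := exists_ESum y ha
  rw [h, ← hs]
  calc (s.card : ℝ) * minc y = s.card • minc y := by rw [nsmul_eq_mul]
    _ ≤ ∑ i ∈ s, y i := Finset.card_nsmul_le_sum s y (minc y) (fun i _ => minc_le y i)

lemma sum_le_ESum_add {n : ℕ} (y : Fin n → ℝ) {b : ℕ} (hb : b ≤ n) :
    (∑ i, y i) ≤ ESum y b + ((n : ℝ) - b) * maxc y := by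
  obtain ⟨t, ht, h⟩ := exists_ESum y hb
  have hcompl : (∑ i, y i) = ∑ i ∈ tᶜ, y i + ∑ i ∈ t, y i := (Finset.sum_compl_add_sum t y).symm
  have hcc : (tᶜ.card : ℝ) = (n : ℝ) - b := by
    rw [Finset.card_compl, ht, Nat.cast_sub (by simpa using hb)]
    simp
  have h2 : ∑ i ∈ tᶜ, y i ≤ ((n : ℝ) - b) * maxc y := by
    calc ∑ i ∈ tᶜ, y i ≤ tᶜ.card • maxc y :=
          Finset.sum_le_card_nsmul tᶜ y (maxc y) (fun i _ => le_maxc y i)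
      _ = ((n : ℝ) - b) * maxc y := by rw [nsmul_eq_mul, hcc]
  rw [hcompl, h]
  linarith

end Aux

/-- Lemma 7 of the paper. Properties of strict
super-majorization under direct sums and tensor products. -/
theorem stmt12 {m p : ℕ} (hm : 0 < m) (hp : 0 < p)
    (x y : Fin m → ℝ) (x' y' : Fin p → ℝ)
    (hx : ∀ i, 0 ≤ x i) (hy : ∀ i, 0 ≤ y i)
    (hx' : ∀ i, 0 ≤ x' i) (hy' : ∀ i, 0 ≤ y' i) :
    (SSupMaj x y → SSupMaj x' y' →
      SSupMaj (Fin.append x x') (Fin.append y y')) ∧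
    (SSupMaj x y → SMaj x' y' →
      (SSupMaj (Fin.append x x') (Fin.append y y') ↔ minc y < maxc y')) ∧
    (SSupMaj x y → SupMaj x' y' → (∀ i, 0 < x' i) →
      SSupMaj (tensor x x') (tensor y y')) := by
  refine ⟨?_, ?_, ?_⟩
  -- Part (1)
  · intro hxy hxy' l hl1 hl2
    obtain ⟨a, b, hab, ham, hbp, hge⟩ := Aux.append_ge x x' hl2
    have hyle : ESum (Fin.append y y') l ≤ ESum y a + ESum y' b := by
      have := Aux.append_le y y' ham hbp
      rwa [hab] at this
    have hstrict : ESum y a + ESum y' b < ESum x a + ESum x' b := by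
      rcases Nat.eq_zero_or_pos a with h0 | h1
      · have hb1 : 1 ≤ b := by omega
        have h3 := hxy' b hb1 hbp
        subst h0
        rw [Aux.ESum_zero, Aux.ESum_zero]
        linarith
      · have h3 := hxy a h1 ham
        have h2 := Aux.weak_le hxy' hbp
        linarith
    linarith
  -- Part (2)
  · intro hxy hxy'
    obtain ⟨hsumeq, hstr⟩ := hxy'
    have hEweak : ∀ b : ℕ, b ≤ p → ESum y' b ≤ ESum x' b := by
      intro b hb
      rcases Nat.eq_zero_or_pos b with h0 | h1
      · subst h0; rw [Aux.ESum_zero, Aux.ESum_zero]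
      rcases Nat.lt_or_ge b p with hblt | hbge
      · have h1' := Aux.ESum_eq_sub x' hb
        have h2' := Aux.ESum_eq_sub y' hb
        have h3 := hstr (p - b) (by omega) (by omega)
        rw [h1', h2', hsumeq]
        linarith
      · have hbp' : b = p := le_antisymm hb hbge
        subst hbp'
        rw [Aux.ESum_univ, Aux.ESum_univ, hsumeq]
    have hEstrict : ∀ b : ℕ, 1 ≤ b → b < p → ESum y' b < ESum x' b := by
      intro b h1 h2
      have h1' := Aux.ESum_eq_sub x' (le_of_lt h2)
      have h2' := Aux.ESum_eq_sub y' (le_of_lt h2)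
      have h3 := hstr (p - b) (by omega) (by omega)
      rw [h1', h2', hsumeq]
      linarith
    constructor
    · intro hSS
      by_contra hc
      push_neg at hc
      obtain ⟨a, b, hab, ham, hbp, hge⟩ := Aux.append_ge y y' (show p ≤ m + p by omega)
      have hk1 : (a : ℝ) * maxc y' ≤ ESum y a := by
        have h4 : (a : ℝ) * maxc y' ≤ (a : ℝ) * minc y :=
          mul_le_mul_of_nonneg_left hc (by positivity)
        linarith [Aux.mul_minc_le_ESum y ham]
      have hk2 : (∑ i, y' i) ≤ ESum y' b + ((p : ℝ) - b) * maxc y' := Aux.sum_le_ESum_add y' hbp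
      have hpa : ((p : ℝ) - (b : ℝ)) = (a : ℝ) := by
        have h5 : a + b = p := hab
        push_cast [← h5]
        ring
      have hy2 : (∑ i, y' i) ≤ ESum (Fin.append y y') p := by
        rw [hpa] at hk2
        linarith
      have hx2 : ESum (Fin.append x x') p ≤ ∑ i, x' i := by
        have h6 := Aux.append_le x x' (Nat.zero_le m) (le_refl p)
        rwa [Nat.zero_add, Aux.ESum_zero, zero_add, Aux.ESum_univ] at h6
      have h7 := hSS p (by omega) (by omega)
      linarith
    · intro hlt l hl1 hl2
      obtain ⟨a, b, hab, ham, hbp, hge⟩ := Aux.append_ge x x' hl2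
      have hyle : ESum (Fin.append y y') l ≤ ESum y a + ESum y' b := by
        have := Aux.append_le y y' ham hbp
        rwa [hab] at this
      rcases Nat.eq_zero_or_pos a with h0 | h1
      · subst h0
        have hbl : b = l := by omega
        subst hbl
        rcases Nat.lt_or_ge b p with hblt | hbge
        · have h3 := hEstrict b (by omega) hblt
          rw [Aux.ESum_zero] at hge hyle
          linarith
        · have hbp' : b = p := le_antisymm hbp hbge
          rw [hbp'] at hge hyle ⊢
          rw [Aux.ESum_zero, zero_add, Aux.ESum_univ] at hge
          obtain ⟨i0, hi0⟩ := Aux.exists_minc hm y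
          obtain ⟨j0, hj0⟩ := Aux.exists_maxc hp y'
          set t : Finset (Fin (m + p)) :=
            ((Finset.univ.erase j0).map (Fin.natAddEmb m)) ∪ {Fin.castAdd p i0} with htd
          have hdisj : Disjoint ((Finset.univ.erase j0).map (Fin.natAddEmb m))
              ({Fin.castAdd p i0} : Finset (Fin (m + p))) := by
            rw [Finset.disjoint_left]
            rintro q hq hq'
            obtain ⟨j, _, rfl⟩ := Finset.mem_map.mp hq
            have hq2 : Fin.natAddEmb m j = Fin.castAdd p i0 := Finset.mem_singleton.mp hq'
            have := congrArg (fun z : Fin (m + p) => (z : ℕ)) hq2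
            simp [Fin.natAddEmb_apply, Fin.natAdd, Fin.castAdd, Fin.castLE] at this
            have := i0.isLt
            omega
          have htc : t.card = p := by
            rw [htd, Finset.card_union_of_disjoint hdisj, Finset.card_map,
              Finset.card_erase_of_mem (Finset.mem_univ j0), Finset.card_singleton]
            simp
            omega
          have hts : ∑ q ∈ t, Fin.append y y' q = (∑ i, y' i) - y' j0 + y i0 := by
            rw [htd, Finset.sum_union hdisj, Finset.sum_map, Finset.sum_singleton,
              Fin.append_left]
            have h8 : ∀ j ∈ Finset.univ.erase j0,
                Fin.append y y' (Fin.natAddEmb m j) = y' j :=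
              fun j _ => Fin.append_right y y' j
            rw [Finset.sum_congr rfl h8]
            have h9 : ∑ j ∈ Finset.univ.erase j0, y' j = (∑ i, y' i) - y' j0 := by
              have := Finset.sum_erase_add Finset.univ y' (Finset.mem_univ j0)
              linarith
            rw [h9]
          have h10 : ESum (Fin.append y y') p ≤ (∑ i, y' i) - y' j0 + y i0 := by
            rw [← hts]
            exact Aux.ESum_le_sum _ htc
          rw [hi0, hj0] at h10
          rw [hsumeq] at hge
          linarith
      · have h3 := hxy a h1 ham
        have h2 := hEweak b hbp
        linarith
  -- Part (3)
  · intro hxy hsup hx'pos l hl1 hl2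
    obtain ⟨b, hb, hbl, hge⟩ := Aux.tensor_ge x x' (fun j => (hx'pos j).le) hl2
    obtain ⟨j0, hj0⟩ : ∃ j0 : Fin p, 1 ≤ b j0 := by
      by_contra hc
      push_neg at hc
      have : ∑ j, b j = 0 := Finset.sum_eq_zero fun j _ => by have := hc j; omega
      omega
    have hweak : ∀ j : Fin p, x' j * ESum y (b j) ≤ x' j * ESum x (b j) :=
      fun j => mul_le_mul_of_nonneg_left (Aux.weak_le hxy (hb j)) (hx'pos j).le
    have hstrict : ∑ j, x' j * ESum y (b j) < ∑ j, x' j * ESum x (b j) := by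
      refine Finset.sum_lt_sum (fun j _ => hweak j) ⟨j0, Finset.mem_univ j0, ?_⟩
      exact mul_lt_mul_of_pos_left (hxy (b j0) hj0 (hb j0)) (hx'pos j0)
    obtain ⟨σ, hσ⟩ := Aux.rearr x' y' (fun j => ESum y (b j))
      (fun j => Aux.ESum_nonneg hy (hb j)) hsup
    have hyle : ESum (tensor y y') l ≤ ∑ j, y' j * ESum y (b (σ j)) := by
      have h11 := Aux.tensor_le y y' (b ∘ σ) (fun j => hb _)
      have h12 : ∑ j, (b ∘ σ) j = l := by
        rw [← hbl]
        exact Equiv.sum_comp σ b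
      rw [h12] at h11
      exact h11
    calc ESum (tensor y y') l ≤ ∑ j, y' j * ESum y (b (σ j)) := hyle
      _ ≤ ∑ j, x' j * ESum y (b j) := hσ
      _ < ∑ j, x' j * ESum x (b j) := hstrict
      _ ≤ ESum (tensor x x') l := hge

end
end

section
/- Let y ∈ V^n be a probability vector with positive components and c a vector with positive non-increasing components, and let [c]_{g_u(y)} = {c^1, …, c^m} be the decomposition of c according to g_u(y). Then T(y,c) = ⋂_{i=1}^m T(y,c^i); equivalently, for x ∈ V^n, x⊗c ≺ y⊗c if and only if x⊗c^i ≺ y⊗c^i for every 1 ≤ i ≤ m. -/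
noncomputable section

set_option linter.unusedSectionVars false
set_option maxHeartbeats 1000000

section GS
variable {ι κ : Type*} [Fintype ι] [Fintype κ]

def gS (x : ι → ℝ) (l : ℕ) : ℝ :=
  sSup {r | ∃ s : Finset ι, s.card = l ∧ r = ∑ i ∈ s, x i}

lemma eSum_eq_gS {N : ℕ} (x : Fin N → ℝ) (l : ℕ) : eSum x l = gS x l := rfl

lemma gS_set_finite (x : ι → ℝ) (l : ℕ) :
    {r : ℝ | ∃ s : Finset ι, s.card = l ∧ r = ∑ i ∈ s, x i}.Finite := by
  apply Set.Finite.subset (Set.finite_range (fun s : Finset ι => ∑ i ∈ s, x i))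
  rintro r ⟨s, -, rfl⟩; exact ⟨s, rfl⟩

lemma sum_le_gS (x : ι → ℝ) {l : ℕ} {s : Finset ι} (h : s.card = l) :
    ∑ i ∈ s, x i ≤ gS x l :=
  le_csSup (gS_set_finite x l).bddAbove ⟨s, h, rfl⟩

lemma exists_gS (x : ι → ℝ) {l : ℕ} (h : l ≤ Fintype.card ι) :
    ∃ s : Finset ι, s.card = l ∧ gS x l = ∑ i ∈ s, x i := by
  obtain ⟨s, -, hs⟩ := Finset.exists_subset_card_eq
    (show l ≤ (Finset.univ : Finset ι).card by simpa using h)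
  have hne : {r : ℝ | ∃ s : Finset ι, s.card = l ∧ r = ∑ i ∈ s, x i}.Nonempty :=
    ⟨_, s, hs, rfl⟩
  exact (Set.Nonempty.csSup_mem hne (gS_set_finite x l))

lemma gS_le_of_forall (x : ι → ℝ) {l : ℕ} (hl : l ≤ Fintype.card ι) {r : ℝ}
    (h : ∀ s : Finset ι, s.card = l → ∑ i ∈ s, x i ≤ r) : gS x l ≤ r := by
  obtain ⟨s, hs, he⟩ := exists_gS x hl
  rw [he]; exact h s hs

lemma gS_zero (x : ι → ℝ) : gS x 0 = 0 := by
  have : {r : ℝ | ∃ s : Finset ι, s.card = 0 ∧ r = ∑ i ∈ s, x i} = {0} := by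
    ext r
    constructor
    · rintro ⟨s, hs, rfl⟩
      rw [Finset.card_eq_zero] at hs
      simp [hs]
    · rintro rfl
      exact ⟨∅, by simp⟩
  rw [gS, this, csSup_singleton]

lemma gS_card (x : ι → ℝ) : gS x (Fintype.card ι) = ∑ i, x i := by
  apply le_antisymm
  · apply gS_le_of_forall x le_rfl
    intro s hs
    have : s = Finset.univ := Finset.eq_univ_of_card s hs
    rw [this]
  · exact sum_le_gS x (by simp)

lemma gS_equiv (e : κ ≃ ι) (x : ι → ℝ) (l : ℕ) : gS (x ∘ e) l = gS x l := by
  unfold gS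
  congr 1
  ext r
  constructor
  · rintro ⟨s, hs, rfl⟩
    exact ⟨s.map e.toEmbedding, by simp [hs], by rw [Finset.sum_map]; rfl⟩
  · rintro ⟨s, hs, rfl⟩
    refine ⟨s.map e.symm.toEmbedding, by simp [hs], ?_⟩
    rw [Finset.sum_map]
    simp

lemma sum_split (u : ι → ℝ) (v : κ → ℝ) (s : Finset (ι ⊕ κ)) :
    ∑ i ∈ s, Sum.elim u v i = ∑ i ∈ s.toLeft, u i + ∑ j ∈ s.toRight, v j := by
  conv_lhs => rw [← Finset.toLeft_disjSum_toRight (u := s)]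
  rw [Finset.sum_sumElim]

lemma gS_elim_ge (u : ι → ℝ) (v : κ → ℝ) {a b : ℕ}
    (ha : a ≤ Fintype.card ι) (hb : b ≤ Fintype.card κ) :
    gS u a + gS v b ≤ gS (Sum.elim u v) (a + b) := by
  obtain ⟨s, hs, hsu⟩ := exists_gS u ha
  obtain ⟨t, ht, htv⟩ := exists_gS v hb
  rw [hsu, htv, ← Finset.sum_sumElim]
  exact sum_le_gS _ (by rw [Finset.card_disjSum, hs, ht])

lemma gS_elim_le_left (u : ι → ℝ) (v : κ → ℝ) (hord : ∀ i j, v j ≤ u i) {l : ℕ}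
    (hl : l ≤ Fintype.card ι) :
    gS (Sum.elim u v) l ≤ gS u l := by
  classical
  apply gS_le_of_forall _ (by simp; omega)
  intro s hcard
  rw [sum_split]
  set s1 := s.toLeft with hs1
  set s2 := s.toRight with hs2
  have hcards : s1.card + s2.card = l := by
    rw [hs1, hs2, Finset.card_toLeft_add_card_toRight, hcard]
  have hle : s2.card ≤ s1ᶜ.card := by
    rw [Finset.card_compl]
    have := Finset.card_le_univ s1
    omega
  obtain ⟨t, hts, htc⟩ := Finset.exists_subset_card_eq hle
  have hdisj : Disjoint s1 t := (disjoint_compl_right : Disjoint s1 s1ᶜ).mono_right hts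
  have hsum2 : ∑ j ∈ s2, v j ≤ ∑ i ∈ t, u i := by
    rcases Finset.eq_empty_or_nonempty s2 with h2 | h2
    · have : t = ∅ := Finset.card_eq_zero.mp (by rw [htc, h2]; simp)
      simp [h2, this]
    · have : Nonempty κ := ⟨h2.choose⟩
      obtain ⟨jm, hjm⟩ := Finite.exists_max v
      calc ∑ j ∈ s2, v j ≤ s2.card • v jm :=
            Finset.sum_le_card_nsmul _ _ _ (fun j _ => hjm j)
        _ = t.card • v jm := by rw [htc]
        _ ≤ ∑ i ∈ t, u i := Finset.card_nsmul_le_sum _ _ _ (fun i _ => hord i jm)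
  calc ∑ i ∈ s1, u i + ∑ j ∈ s2, v j ≤ ∑ i ∈ s1, u i + ∑ i ∈ t, u i := by linarith
    _ = ∑ i ∈ s1 ∪ t, u i := (Finset.sum_union hdisj).symm
    _ ≤ gS u l := sum_le_gS u (by rw [Finset.card_union_of_disjoint hdisj, htc]; omega)

lemma gS_elim_left_eq (u : ι → ℝ) (v : κ → ℝ) (hord : ∀ i j, v j ≤ u i) {l : ℕ}
    (hl : l ≤ Fintype.card ι) :
    gS (Sum.elim u v) l = gS u l := by
  refine le_antisymm (gS_elim_le_left u v hord hl) ?_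
  have := gS_elim_ge u v (a := l) (b := 0) hl (Nat.zero_le _)
  rwa [gS_zero, add_zero, add_zero] at this

lemma gS_elim_right (u : ι → ℝ) (v : κ → ℝ) (hord : ∀ i j, v j ≤ u i) {l : ℕ}
    (hl : l ≤ Fintype.card κ) :
    gS (Sum.elim u v) (Fintype.card ι + l) = (∑ i, u i) + gS v l := by
  classical
  refine le_antisymm ?_ ?_
  · apply gS_le_of_forall _ (by simp; omega)
    intro s hcard
    rw [sum_split]
    set s1 := s.toLeft with hs1
    set s2 := s.toRight with hs2
    have hcards : s1.card + s2.card = Fintype.card ι + l := by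
      rw [hs1, hs2, Finset.card_toLeft_add_card_toRight, hcard]
    have ha : s1.card ≤ Fintype.card ι := Finset.card_le_univ s1
    have hlb : l ≤ s2.card := by omega
    rcases isEmpty_or_nonempty κ with hk | hk
    · have h2 : s2.card = 0 := by
        have h := Finset.card_le_univ s2
        have h0 : Fintype.card κ = 0 := Fintype.card_eq_zero
        omega
      have hl0 : l = 0 := by omega
      have hs1u : s1 = Finset.univ := Finset.eq_univ_of_card s1 (by omega)
      have h2e : s2 = ∅ := Finset.card_eq_zero.mp h2
      rw [hl0, gS_zero, hs1u, h2e]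
      simp
    · obtain ⟨jm, hjm⟩ := Finite.exists_max v
      obtain ⟨t, hts, htc⟩ := Finset.exists_subset_card_eq hlb
      have e1 : ∑ j ∈ s2, v j = ∑ j ∈ s2 \ t, v j + ∑ j ∈ t, v j :=
        (Finset.sum_sdiff hts).symm
      have e2 : ∑ j ∈ t, v j ≤ gS v l := sum_le_gS v htc
      have e3 : ∑ j ∈ s2 \ t, v j ≤ (s2.card - l : ℕ) • v jm := by
        have : (s2 \ t).card = s2.card - l := by
          rw [Finset.card_sdiff_of_subset hts, htc]
        rw [← this]
        exact Finset.sum_le_card_nsmul _ _ _ (fun j _ => hjm j)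
      have e4 : ∑ i ∈ s1, u i + ∑ i ∈ s1ᶜ, u i = ∑ i, u i := Finset.sum_add_sum_compl s1 u
      have e5 : (s1ᶜ.card : ℕ) • v jm ≤ ∑ i ∈ s1ᶜ, u i :=
        Finset.card_nsmul_le_sum _ _ _ (fun i _ => hord i jm)
      have hcc : s1ᶜ.card = s2.card - l := by
        rw [Finset.card_compl]; omega
      rw [hcc] at e5
      simp only [nsmul_eq_mul] at e3 e5
      linarith
  · have := gS_elim_ge u v (a := Fintype.card ι) (b := l) le_rfl hl
    rwa [gS_card] at this

lemma gS_elim_maj {u u' : ι → ℝ} {v v' : κ → ℝ}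
    (hu : ∀ a, a ≤ Fintype.card ι → gS u a ≤ gS u' a)
    (hv : ∀ b, b ≤ Fintype.card κ → gS v b ≤ gS v' b) {l : ℕ}
    (hl : l ≤ Fintype.card ι + Fintype.card κ) :
    gS (Sum.elim u v) l ≤ gS (Sum.elim u' v') l := by
  apply gS_le_of_forall _ (by simp; omega)
  intro s hcard
  rw [sum_split]
  have ha : s.toLeft.card ≤ Fintype.card ι := Finset.card_le_univ s.toLeft
  have hb : s.toRight.card ≤ Fintype.card κ := Finset.card_le_univ s.toRight
  have hab : s.toLeft.card + s.toRight.card = l := by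
    rw [Finset.card_toLeft_add_card_toRight, hcard]
  calc ∑ i ∈ s.toLeft, u i + ∑ j ∈ s.toRight, v j
      ≤ gS u s.toLeft.card + gS v s.toRight.card :=
        add_le_add (sum_le_gS u rfl) (sum_le_gS v rfl)
    _ ≤ gS u' s.toLeft.card + gS v' s.toRight.card :=
        add_le_add (hu _ ha) (hv _ hb)
    _ ≤ gS (Sum.elim u' v') (s.toLeft.card + s.toRight.card) := gS_elim_ge u' v' ha hb
    _ = gS (Sum.elim u' v') l := by rw [hab]

end GS



lemma tensor_apply_prod {n k : ℕ} (x : Fin n → ℝ) (c : Fin k → ℝ) (p : Fin n) (q : Fin k) :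
    tensor x c (finProdFinEquiv (p, q)) = x p * c q := by
  simp [tensor]

lemma sum_tensor {n k : ℕ} (x : Fin n → ℝ) (c : Fin k → ℝ) :
    ∑ t, tensor x c t = (∑ i, x i) * (∑ j, c j) := by
  rw [← Equiv.sum_comp finProdFinEquiv (tensor x c), Finset.sum_mul_sum]
  rw [Fintype.sum_prod_type]
  exact Finset.sum_congr rfl fun p _ => Finset.sum_congr rfl fun q _ => tensor_apply_prod x c p q

def splitEquiv (n d e k : ℕ) (h : d + e = k) : Fin (n*d) ⊕ Fin (n*e) ≃ Fin (n*k) :=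
  (Equiv.sumCongr finProdFinEquiv.symm finProdFinEquiv.symm).trans <|
  ((Equiv.prodSumDistrib (Fin n) (Fin d) (Fin e)).symm).trans <|
  ((Equiv.prodCongr (Equiv.refl (Fin n)) finSumFinEquiv)).trans <|
  (finProdFinEquiv.trans (finCongr (by rw [h])))

lemma tensor_splitEquiv {n k : ℕ} (x : Fin n → ℝ) (c : Fin k → ℝ) {d e : ℕ} (h : d + e = k)
    (c1 : Fin d → ℝ) (c2 : Fin e → ℝ)
    (h1 : ∀ t : Fin d, c1 t = c ⟨t, by omega⟩)
    (h2 : ∀ t : Fin e, c2 t = c ⟨d + t, by omega⟩) :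
    (tensor x c) ∘ (splitEquiv n d e k h) = Sum.elim (tensor x c1) (tensor x c2) := by
  subst h
  funext t
  rcases t with a | b
  · obtain ⟨⟨p, q⟩, rfl⟩ := finProdFinEquiv.surjective a
    have he : (splitEquiv n d e (d+e) rfl) (Sum.inl (finProdFinEquiv (p, q)))
        = finProdFinEquiv (p, (⟨(q : ℕ), by omega⟩ : Fin (d+e))) := by
      apply Fin.ext; simp [splitEquiv]
    show tensor x c ((splitEquiv n d e (d+e) rfl) (Sum.inl (finProdFinEquiv (p, q))))
        = tensor x c1 (finProdFinEquiv (p, q))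
    rw [he, tensor_apply_prod, tensor_apply_prod, h1 q]
  · obtain ⟨⟨p, q⟩, rfl⟩ := finProdFinEquiv.surjective b
    have he : (splitEquiv n d e (d+e) rfl) (Sum.inr (finProdFinEquiv (p, q)))
        = finProdFinEquiv (p, (⟨d + (q : ℕ), by omega⟩ : Fin (d+e))) := by
      apply Fin.ext; simp [splitEquiv]
    show tensor x c ((splitEquiv n d e (d+e) rfl) (Sum.inr (finProdFinEquiv (p, q))))
        = tensor x c2 (finProdFinEquiv (p, q))
    rw [he, tensor_apply_prod, tensor_apply_prod, h2 q]


lemma gS_tensor_split {n k d e : ℕ} (h : d + e = k) (x : Fin n → ℝ) (c : Fin k → ℝ)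
    (c1 : Fin d → ℝ) (c2 : Fin e → ℝ)
    (h1 : ∀ t : Fin d, c1 t = c ⟨t, by omega⟩)
    (h2 : ∀ t : Fin e, c2 t = c ⟨d + t, by omega⟩) (l : ℕ) :
    gS (tensor x c) l = gS (Sum.elim (tensor x c1) (tensor x c2)) l := by
  rw [← tensor_splitEquiv x c h c1 c2 h1 h2]
  exact (gS_equiv (splitEquiv n d e k h) (tensor x c) l).symm

lemma sum_tensor_split {n k d e : ℕ} (h : d + e = k) (x : Fin n → ℝ) (c : Fin k → ℝ)
    (c1 : Fin d → ℝ) (c2 : Fin e → ℝ)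
    (h1 : ∀ t : Fin d, c1 t = c ⟨t, by omega⟩)
    (h2 : ∀ t : Fin e, c2 t = c ⟨d + t, by omega⟩) :
    ∑ t, tensor x c t = ∑ t, tensor x c1 t + ∑ t, tensor x c2 t := by
  rw [← Equiv.sum_comp (splitEquiv n d e k h) (tensor x c)]
  have : ∀ i, tensor x c ((splitEquiv n d e k h) i)
      = Sum.elim (tensor x c1) (tensor x c2) i :=
    fun i => congrFun (tensor_splitEquiv x c h c1 c2 h1 h2) i
  rw [Finset.sum_congr rfl (fun i _ => this i)]
  exact Fintype.sum_sum_type _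

lemma maj_glue {n k d e : ℕ} (h : d + e = k) (x y : Fin n → ℝ) (c : Fin k → ℝ)
    (c1 : Fin d → ℝ) (c2 : Fin e → ℝ)
    (h1 : ∀ t : Fin d, c1 t = c ⟨t, by omega⟩)
    (h2 : ∀ t : Fin e, c2 t = c ⟨d + t, by omega⟩)
    (m1 : Maj (tensor x c1) (tensor y c1)) (m2 : Maj (tensor x c2) (tensor y c2)) :
    Maj (tensor x c) (tensor y c) := by
  constructor
  · rw [sum_tensor_split h x c c1 c2 h1 h2, sum_tensor_split h y c c1 c2 h1 h2, m1.1, m2.1]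
  · intro l hl1 hl2
    show gS (tensor x c) l ≤ gS (tensor y c) l
    rw [gS_tensor_split h x c c1 c2 h1 h2, gS_tensor_split h y c c1 c2 h1 h2]
    apply gS_elim_maj
    · intro a ha
      rcases Nat.eq_zero_or_pos a with rfl | hpos
      · rw [gS_zero, gS_zero]
      · have := m1.2 a hpos (by simpa using ha)
        rwa [eSum_eq_gS, eSum_eq_gS] at this
    · intro b hb
      rcases Nat.eq_zero_or_pos b with rfl | hpos
      · rw [gS_zero, gS_zero]
      · have := m2.2 b hpos (by simpa using hb)
        rwa [eSum_eq_gS, eSum_eq_gS] at this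
    · simp only [Fintype.card_fin]
      calc l ≤ n * k := hl2
        _ = n * d + n * e := by rw [← h, Nat.mul_add]

lemma maj_tensor_ext {n k1 k2 : ℕ} (h : k1 = k2) (c1 : Fin k1 → ℝ) (c2 : Fin k2 → ℝ)
    (hc : ∀ t : Fin k1, c1 t = c2 ⟨t, by omega⟩) (x y : Fin n → ℝ)
    (hm : Maj (tensor x c1) (tensor y c1)) : Maj (tensor x c2) (tensor y c2) := by
  subst h
  have : c1 = c2 := funext fun t => (hc t).trans (congrArg c2 (Fin.ext rfl))
  rwa [← this]


lemma fwd {n k : ℕ} (hn : 0 < n)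
    (y : Fin n → ℝ) (hy : y ∈ Vn n) (hypos : ∀ i, 0 < y i)
    (c : Fin k → ℝ) (hcpos : ∀ i, 0 < c i) (hcanti : Antitone c)
    (x : Fin n → ℝ) (hx : x ∈ Vn n)
    (hm : Maj (tensor x c) (tensor y c))
    (i j : ℕ) (hij : i ≤ j) (hj : j < k) (hb : IsBlock (gu y) c i j) :
    Maj (tensor x (seg c i j hij hj)) (tensor y (seg c i j hij hj)) := by
  obtain ⟨hij', hj', hleft, hright, hint⟩ := hb
  obtain ⟨hx0, hx1, hxanti⟩ := hx
  obtain ⟨hy0, hy1, hyanti⟩ := hy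
  have hik : i ≤ k := le_of_lt (lt_of_le_of_lt hij hj)
  set L := j - i + 1 with hLdef
  set c1 : Fin i → ℝ := fun t => c ⟨t, by have := t.isLt; omega⟩ with hc1
  set crest : Fin (k - i) → ℝ := fun t => c ⟨i + t, by have := t.isLt; omega⟩ with hcrest
  set cmid := seg c i j hij hj with hcmid
  set cafter : Fin ((k - i) - L) → ℝ :=
    fun t => c ⟨j + 1 + t, by have := t.isLt; omega⟩ with hcafter
  have hsplit1 : i + (k - i) = k := by omega
  have hsplit2 : L + ((k - i) - L) = k - i := by omega
  have h11 : ∀ t : Fin i, c1 t = c ⟨t, by omega⟩ := fun t => rfl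
  have h12 : ∀ t : Fin (k - i), crest t = c ⟨i + t, by omega⟩ := fun t => rfl
  have h21 : ∀ t : Fin L, cmid t = crest ⟨t, by omega⟩ := fun t => rfl
  have h22 : ∀ t : Fin ((k - i) - L), cafter t = crest ⟨L + t, by omega⟩ := by
    intro t
    rw [hcafter, hcrest]
    exact congrArg c (Fin.ext (by simp; omega))
  -- ordering facts
  have hord1 : ∀ (a : Fin (n * i)) (b : Fin (n * (k - i))),
      tensor y crest b ≤ tensor y c1 a := by
    intro a b
    rcases Nat.eq_zero_or_pos i with hi0 | hipos
    · exfalso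
      have h := a.isLt
      have h2 : n * i = 0 := by rw [hi0, Nat.mul_zero]
      omega
    · have hbound : c ⟨i, by omega⟩ / c ⟨i - 1, by omega⟩ ≤ gu y := by
        rcases hleft with h0 | h0
        · omega
        · exact h0
      obtain ⟨⟨p, q⟩, rfl⟩ := finProdFinEquiv.surjective a
      obtain ⟨⟨p', q'⟩, rfl⟩ := finProdFinEquiv.surjective b
      rw [tensor_apply_prod, tensor_apply_prod]
      have e1 : y p' ≤ y ⟨0, hn⟩ := hyanti (by simp [Fin.le_def])
      have e2 : crest q' ≤ c ⟨i, by omega⟩ := by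
        have : c ⟨i + q', by have := q'.isLt; omega⟩ ≤ c ⟨i, by omega⟩ :=
          hcanti (by simp [Fin.le_def])
        exact this
      have e3 : y ⟨n - 1, by omega⟩ ≤ y p := by
        refine hyanti ?_
        have := p.isLt
        simp [Fin.le_def]; omega
      have e4 : c ⟨i - 1, by omega⟩ ≤ c1 q := by
        have hq := q.isLt
        have : c ⟨i - 1, by omega⟩ ≤ c ⟨q, by omega⟩ :=
          hcanti (by simp [Fin.le_def]; omega)
        exact this
      have key : y ⟨0, hn⟩ * c ⟨i, by omega⟩ ≤ y ⟨n - 1, by omega⟩ * c ⟨i - 1, by omega⟩ := by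
        rw [gu, dif_pos hn] at hbound
        have hcp : (0:ℝ) < c ⟨i - 1, by omega⟩ := hcpos _
        have hyp : (0:ℝ) < y ⟨0, hn⟩ := hypos _
        rw [div_le_div_iff₀ hcp hyp] at hbound
        nlinarith [hbound]
      have hcrp : (0:ℝ) ≤ crest q' := le_of_lt (by rw [hcrest]; exact hcpos _)
      have hc1p : (0:ℝ) ≤ c1 q := le_of_lt (by rw [hc1]; exact hcpos _)
      calc y p' * crest q' ≤ y ⟨0, hn⟩ * c ⟨i, by omega⟩ :=
            mul_le_mul e1 e2 hcrp (le_of_lt (hypos _))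
        _ ≤ y ⟨n - 1, by omega⟩ * c ⟨i - 1, by omega⟩ := key
        _ ≤ y p * c1 q := mul_le_mul e3 e4 (le_of_lt (hcpos _)) (le_of_lt (hypos _))
  have hord2 : ∀ (a : Fin (n * L)) (b : Fin (n * ((k - i) - L))),
      tensor y cafter b ≤ tensor y cmid a := by
    intro a b
    rcases hright with hkm1 | ⟨hj1, hratio⟩
    · exfalso
      have h := b.isLt
      have h0 : (k - i) - L = 0 := by omega
      have h2 : n * ((k - i) - L) = 0 := by rw [h0, Nat.mul_zero]
      omega
    · obtain ⟨⟨p, q⟩, rfl⟩ := finProdFinEquiv.surjective a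
      obtain ⟨⟨p', q'⟩, rfl⟩ := finProdFinEquiv.surjective b
      rw [tensor_apply_prod, tensor_apply_prod]
      have e1 : y p' ≤ y ⟨0, hn⟩ := hyanti (by simp [Fin.le_def])
      have e2 : cafter q' ≤ c ⟨j + 1, hj1⟩ := by
        have : c ⟨j + 1 + q', by have := q'.isLt; omega⟩ ≤ c ⟨j + 1, hj1⟩ :=
          hcanti (by simp [Fin.le_def])
        exact this
      have e3 : y ⟨n - 1, by omega⟩ ≤ y p := by
        refine hyanti ?_
        have := p.isLt
        simp [Fin.le_def]; omega
      have e4 : c ⟨j, hj⟩ ≤ cmid q := by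
        have hq := q.isLt
        have : c ⟨j, hj⟩ ≤ c ⟨i + q, by omega⟩ := hcanti (by simp [Fin.le_def]; omega)
        exact this
      have key : y ⟨0, hn⟩ * c ⟨j + 1, hj1⟩ ≤ y ⟨n - 1, by omega⟩ * c ⟨j, hj⟩ := by
        rw [gu, dif_pos hn] at hratio
        have hcp : (0:ℝ) < c ⟨j, hj⟩ := hcpos _
        have hyp : (0:ℝ) < y ⟨0, hn⟩ := hypos _
        rw [div_le_div_iff₀ hcp hyp] at hratio
        nlinarith [hratio]
      have hcap : (0:ℝ) ≤ cafter q' := le_of_lt (by rw [hcafter]; exact hcpos _)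
      have hcmp : (0:ℝ) ≤ cmid q := le_of_lt (by rw [hcmid]; exact hcpos _)
      calc y p' * cafter q' ≤ y ⟨0, hn⟩ * c ⟨j + 1, hj1⟩ :=
            mul_le_mul e1 e2 hcap (le_of_lt (hypos _))
        _ ≤ y ⟨n - 1, by omega⟩ * c ⟨j, hj⟩ := key
        _ ≤ y p * cmid q := mul_le_mul e3 e4 (le_of_lt (hcpos _)) (le_of_lt (hypos _))
  constructor
  · rw [sum_tensor, sum_tensor, hx1, hy1]
  · intro l hl1 hl2
    show gS (tensor x cmid) l ≤ gS (tensor y cmid) l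
    have hl2' : l ≤ n * L := hl2
    have hcard1 : l ≤ n * (k - i) := le_trans hl2' (Nat.mul_le_mul_left n (by omega))
    have hLk : n * i + l ≤ n * k := by
      calc n * i + l ≤ n * i + n * L := by omega
        _ = n * (i + L) := (Nat.mul_add n i L).symm
        _ ≤ n * k := Nat.mul_le_mul_left n (by omega)
    have A1x : gS (tensor x c) (n * i + l)
        = gS (Sum.elim (tensor x c1) (tensor x crest)) (n * i + l) :=
      gS_tensor_split hsplit1 x c c1 crest h11 h12 _
    have A2 : gS (tensor x c1) (n * i) + gS (tensor x crest) l
        ≤ gS (Sum.elim (tensor x c1) (tensor x crest)) (n * i + l) :=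
      gS_elim_ge _ _ (by simp) (by simpa using hcard1)
    have A3 : gS (tensor x c1) (n * i) = ∑ t, tensor x c1 t := by
      have := gS_card (tensor x c1)
      rwa [Fintype.card_fin] at this
    have A4 : gS (tensor x cmid) l ≤ gS (tensor x crest) l := by
      rw [gS_tensor_split hsplit2 x crest cmid cafter h21 h22 l]
      have := gS_elim_ge (tensor x cmid) (tensor x cafter) (a := l) (b := 0)
        (by simpa using hl2') (Nat.zero_le _)
      rwa [gS_zero, add_zero, add_zero] at this
    have A5 : gS (tensor x c) (n * i + l) ≤ gS (tensor y c) (n * i + l) := by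
      have := hm.2 (n * i + l) (by omega) hLk
      rwa [eSum_eq_gS, eSum_eq_gS] at this
    have A6 : gS (tensor y c) (n * i + l)
        = (∑ t, tensor y c1 t) + gS (tensor y crest) l := by
      rw [gS_tensor_split hsplit1 y c c1 crest h11 h12]
      have := gS_elim_right (tensor y c1) (tensor y crest) hord1 (l := l)
        (by simpa using hcard1)
      rwa [Fintype.card_fin] at this
    have A7 : gS (tensor y crest) l = gS (tensor y cmid) l := by
      rw [gS_tensor_split hsplit2 y crest cmid cafter h21 h22]
      exact gS_elim_left_eq _ _ hord2 (by simpa using hl2')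
    have A8 : ∑ t, tensor x c1 t = ∑ t, tensor y c1 t := by
      rw [sum_tensor, sum_tensor, hx1, hy1]
    linarith

lemma bwd {n k : ℕ} (hn : 0 < n) (hk : 0 < k)
    (y : Fin n → ℝ) (c : Fin k → ℝ) (x : Fin n → ℝ)
    (H : ∀ (i j : ℕ) (hij : i ≤ j) (hj : j < k), IsBlock (gu y) c i j →
        Maj (tensor x (seg c i j hij hj)) (tensor y (seg c i j hij hj))) :
    Maj (tensor x c) (tensor y c) := by
  classical
  have main : ∀ s : ℕ, ∀ i : ℕ, ∀ hi : i < k, k - i ≤ s →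
      (i = 0 ∨ c ⟨i, hi⟩ / c ⟨i - 1, by omega⟩ ≤ gu y) →
      Maj (tensor x (fun t : Fin (k - i) => c ⟨i + t, by have := t.isLt; omega⟩))
          (tensor y (fun t : Fin (k - i) => c ⟨i + t, by have := t.isLt; omega⟩)) := by
    intro s
    induction s with
    | zero => intro i hi hs _; omega
    | succ s ih =>
      intro i hi hs hbd
      by_cases hex : ∃ t : ℕ, ∃ h : t + 1 < k, i ≤ t ∧ c ⟨t + 1, h⟩ / c ⟨t, by omega⟩ ≤ gu y
      · obtain ⟨hj1, hijle, hratio⟩ := Nat.find_spec hex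
        set j := Nat.find hex with hjdef
        have hblock : IsBlock (gu y) c i j := by
          refine ⟨hijle, by omega, ?_, Or.inr ⟨hj1, hratio⟩, ?_⟩
          · exact hbd
          · intro t ht1 ht2
            have hnot := Nat.find_min hex ht2
            have hx : ¬ (c ⟨t + 1, by omega⟩ / c ⟨t, by omega⟩ ≤ gu y) := by
              intro hcon
              exact hnot ⟨by omega, ht1, hcon⟩
            exact not_le.mp hx
        have hseg := H i j hijle (by omega) hblock
        have hIH := ih (j + 1) (by omega) (by omega) (Or.inr hratio)
        refine maj_glue (k := k - i) (d := j + 1 - i) (e := (k - i) - (j + 1 - i))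
          (by omega) x y _
          (fun t : Fin (j + 1 - i) => c ⟨i + t, by have := t.isLt; omega⟩)
          (fun t : Fin ((k - i) - (j + 1 - i)) => c ⟨j + 1 + t, by have := t.isLt; omega⟩)
          (fun t => rfl) (fun t => congrArg c (Fin.ext (by simp; omega))) ?_ ?_
        · have hseg' : Maj
              (tensor x (fun t : Fin (j - i + 1) => c ⟨i + ↑t, by have := t.isLt; omega⟩))
              (tensor y (fun t : Fin (j - i + 1) => c ⟨i + ↑t, by have := t.isLt; omega⟩)) := hseg
          exact maj_tensor_ext (show j - i + 1 = j + 1 - i by omega)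
            (fun t : Fin (j - i + 1) => c ⟨i + ↑t, by have := t.isLt; omega⟩)
            (fun t : Fin (j + 1 - i) => c ⟨i + ↑t, by have := t.isLt; omega⟩)
            (fun t => rfl) x y hseg'
        · exact maj_tensor_ext (show k - (j + 1) = (k - i) - (j + 1 - i) by omega)
            (fun t : Fin (k - (j + 1)) => c ⟨j + 1 + ↑t, by have := t.isLt; omega⟩)
            (fun t : Fin ((k - i) - (j + 1 - i)) => c ⟨j + 1 + ↑t, by have := t.isLt; omega⟩)
            (fun t => rfl) x y hIH
      · push_neg at hex
        have hblock : IsBlock (gu y) c i (k - 1) := by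
          refine ⟨by omega, by omega, hbd, Or.inl rfl, ?_⟩
          intro t ht1 ht2
          exact hex t (by omega) ht1
        have hseg := H i (k - 1) (by omega) (by omega) hblock
        have hseg' : Maj
            (tensor x (fun t : Fin (k - 1 - i + 1) => c ⟨i + ↑t, by have := t.isLt; omega⟩))
            (tensor y (fun t : Fin (k - 1 - i + 1) => c ⟨i + ↑t, by have := t.isLt; omega⟩)) := hseg
        exact maj_tensor_ext (show k - 1 - i + 1 = k - i by omega)
          (fun t : Fin (k - 1 - i + 1) => c ⟨i + ↑t, by have := t.isLt; omega⟩)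
          (fun t : Fin (k - i) => c ⟨i + ↑t, by have := t.isLt; omega⟩)
          (fun t => rfl) x y hseg'
  have hmain := main k 0 hk (by omega) (Or.inl rfl)
  exact maj_tensor_ext (show k - 0 = k by omega)
    (fun t : Fin (k - 0) => c ⟨0 + ↑t, by have := t.isLt; omega⟩) c
    (fun t => congrArg c (Fin.ext (by simp))) x y hmain

/-- Lemma 8 of the paper. With `[c]_{g_u(y)}` the
decomposition of `c` according to `g_u(y)`: for `x ∈ Vⁿ`,
`x ⊗ c ≺ y ⊗ c` iff `x ⊗ c^i ≺ y ⊗ c^i` for every block `c^i` of the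
decomposition. -/
theorem stmt13 {n k : ℕ} (hn : 0 < n) (hk : 0 < k)
    (y : Fin n → ℝ) (hy : y ∈ Vn n) (hypos : ∀ i, 0 < y i)
    (c : Fin k → ℝ) (hcpos : ∀ i, 0 < c i) (hcanti : Antitone c)
    (x : Fin n → ℝ) (hx : x ∈ Vn n) :
    Maj (tensor x c) (tensor y c) ↔
      ∀ (i j : ℕ) (hij : i ≤ j) (hj : j < k), IsBlock (gu y) c i j →
        Maj (tensor x (seg c i j hij hj)) (tensor y (seg c i j hij hj)) := by
  constructor
  · intro hm i j hij hj hb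
    exact fwd hn y hy hypos c hcpos hcanti x hx hm i j hij hj hb
  · intro H
    exact bwd hn hk y c x H

end
end
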